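/- Let (X, d) be a metric space and let 𝒰 be a locally finite open cover of X of multiplicity ≤ m such that every member U ∈ 𝒰 has nonempty complement and satisfies L(𝒰)|_U > 0, and set λ_U = L(𝒰)|_U / (2m+1)². Define p : X → ℓ²(𝒰) by p(x)_U = λ_U · φ_U(x), where φ_U(x) = d(x, X∖U) / Σ_{V∈𝒰} d(x, X∖V). Then p(x) lies in ℓ²(𝒰) for every x, and p is 1-Lipschitz: ‖p(x) − p(y)‖_{ℓ²} ≤ d(x, y) for all x, y ∈ X. -/

import Mathlib

open Metric ENNReal

/-- the weighted partition-of-unity map `p : X → ℓ²(𝒰)`,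
`p(x)_U = λ_U φ_U(x)` with `λ_U = L(𝒰)|_U/(2m+1)²`, takes values in `ℓ²(𝒰)` and is
`1`-Lipschitz. -/
theorem stmt3 (X : Type*) [MetricSpace X] (𝒰 : Set (Set X)) (m : ℕ)
    (hopen : ∀ U ∈ 𝒰, IsOpen U)
    (hcover : ∀ x : X, ∃ U ∈ 𝒰, x ∈ U)
    (hlf : LocallyFinite (fun U : 𝒰 => (U : Set X)))
    (hmult : ∀ x : X, {U : Set X | U ∈ 𝒰 ∧ x ∈ U}.Finite ∧
      Nat.card {U : Set X | U ∈ 𝒰 ∧ x ∈ U} ≤ m)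
    (hcompl : ∀ U ∈ 𝒰, ((U : Set X)ᶜ).Nonempty)
    (hLeb : ∀ U ∈ 𝒰,
      0 < ⨅ y : (U : Set X), ⨆ V : 𝒰, infDist (y : X) ((V : Set X)ᶜ)) :
    ∃ p : X → lp (fun _ : 𝒰 => ℝ) 2,
      (∀ (x : X) (U : 𝒰), (p x : ∀ _ : 𝒰, ℝ) U =
        ((⨅ z : (U : Set X), ⨆ V : 𝒰, infDist (z : X) ((V : Set X)ᶜ)) /
            (2 * (m : ℝ) + 1) ^ 2) *
          (infDist x ((U : Set X)ᶜ) / ∑' W : 𝒰, infDist x ((W : Set X)ᶜ))) ∧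
      ∀ x y : X, ‖p x - p y‖ ≤ dist x y := by
  classical
  set c : ℝ := 2 * (m : ℝ) + 1 with hc
  have hcpos : 0 < c := by positivity
  -- basic facts about F x U := infDist x Uᶜ
  set F : X → 𝒰 → ℝ := fun x U => infDist x ((U : Set X)ᶜ) with hF
  have hFnonneg : ∀ x (U : 𝒰), 0 ≤ F x U := fun x U => infDist_nonneg
  have hFzero : ∀ x (U : 𝒰), x ∉ (U : Set X) → F x U = 0 := fun x U hx =>
    infDist_zero_of_mem (by simpa using hx)
  have hFpos : ∀ x (U : 𝒰), x ∈ (U : Set X) → 0 < F x U := by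
    intro x U hx
    have hcl : IsClosed ((U : Set X)ᶜ) := (hopen U U.2).isClosed_compl
    exact (hcl.notMem_iff_infDist_pos (hcompl U U.2)).1 (by simpa using hx)
  have hFlip : ∀ (U : 𝒰) (x y : X), |F x U - F y U| ≤ dist x y := by
    intro U x y
    have h := (lipschitz_infDist_pt ((U : Set X)ᶜ)).dist_le_mul x y
    rw [Real.dist_eq] at h
    simpa using h
  -- finite multiplicity
  have htfin : ∀ x : X, {U : 𝒰 | x ∈ (U : Set X)}.Finite := by
    intro x
    have he : Subtype.val ⁻¹' {U : Set X | U ∈ 𝒰 ∧ x ∈ U} = {U : 𝒰 | x ∈ (U : Set X)} := by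
      ext U; simp [U.2]
    rw [← he]
    exact (hmult x).1.preimage Subtype.val_injective.injOn
  set t : X → Finset 𝒰 := fun x => (htfin x).toFinset with ht
  have htmem : ∀ x (U : 𝒰), U ∈ t x ↔ x ∈ (U : Set X) := by
    intro x U; simp [ht, Set.Finite.mem_toFinset]
  have htcard : ∀ x, (t x).card ≤ m := by
    intro x
    have e : {U : 𝒰 | x ∈ (U : Set X)} ≃ {U : Set X | U ∈ 𝒰 ∧ x ∈ U} :=
      ⟨fun U => ⟨U.1.1, U.1.2, U.2⟩, fun U => ⟨⟨U.1, U.2.1⟩, U.2.2⟩, fun _ => rfl, fun _ => rfl⟩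
    calc (t x).card = {U : 𝒰 | x ∈ (U : Set X)}.ncard :=
          (Set.ncard_eq_toFinset_card _ (htfin x)).symm
      _ = Nat.card {U : 𝒰 | x ∈ (U : Set X)} := (Nat.card_coe_set_eq _).symm
      _ = Nat.card {U : Set X | U ∈ 𝒰 ∧ x ∈ U} := Nat.card_congr e
      _ ≤ m := (hmult x).2
  have hFzero' : ∀ x (U : 𝒰), U ∉ t x → F x U = 0 := by
    intro x U hU
    exact hFzero x U (fun hx => hU ((htmem x U).2 hx))
  -- the sum S
  set S : X → ℝ := fun x => ∑' W : 𝒰, F x W with hS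
  have hSsum : ∀ x (s : Finset 𝒰), t x ⊆ s → S x = ∑ U ∈ s, F x U := by
    intro x s hsub
    exact tsum_eq_sum (fun U hU => hFzero' x U (fun h => hU (hsub h)))
  have hSpos : ∀ x, 0 < S x := by
    intro x
    obtain ⟨U, hU, hxU⟩ := hcover x
    rw [hSsum x (t x) le_rfl]
    exact Finset.sum_pos' (fun V _ => hFnonneg x V)
      ⟨⟨U, hU⟩, (htmem x ⟨U, hU⟩).2 hxU, hFpos x ⟨U, hU⟩ hxU⟩
  have hFleS : ∀ x (V : 𝒰), F x V ≤ S x := by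
    intro x V
    by_cases hV : V ∈ t x
    · rw [hSsum x (t x) le_rfl]
      exact Finset.single_le_sum (fun W _ => hFnonneg x W) hV
    · rw [hFzero' x V hV]; exact (hSpos x).le
  have hSlip : ∀ x y : X, |S x - S y| ≤ (2 * (m : ℝ)) * dist x y := by
    intro x y
    rw [hSsum x (t x ∪ t y) Finset.subset_union_left,
      hSsum y (t x ∪ t y) Finset.subset_union_right, ← Finset.sum_sub_distrib]
    calc |∑ U ∈ t x ∪ t y, (F x U - F y U)| ≤ ∑ U ∈ t x ∪ t y, |F x U - F y U| :=
        Finset.abs_sum_le_sum_abs _ _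
      _ ≤ ∑ _U ∈ t x ∪ t y, dist x y := Finset.sum_le_sum fun U _ => hFlip U x y
      _ = ((t x ∪ t y).card : ℝ) * dist x y := by rw [Finset.sum_const, nsmul_eq_mul]
      _ ≤ (2 * (m : ℝ)) * dist x y := by
          apply mul_le_mul_of_nonneg_right _ dist_nonneg
          have h1 := Finset.card_union_le (t x) (t y)
          have h2 := htcard x
          have h3 := htcard y
          have : ((t x ∪ t y).card : ℝ) ≤ ((t x).card : ℝ) + ((t y).card : ℝ) := by
            exact_mod_cast h1
          have h4 : ((t x).card : ℝ) ≤ (m : ℝ) := by exact_mod_cast h2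
          have h5 : ((t y).card : ℝ) ≤ (m : ℝ) := by exact_mod_cast h3
          linarith
  -- the Lebesgue numbers
  set L : 𝒰 → ℝ := fun U => ⨅ z : (U : Set X), ⨆ V : 𝒰, infDist (z : X) ((V : Set X)ᶜ) with hL
  have hLnonneg : ∀ U : 𝒰, 0 ≤ L U := fun U => (hLeb U U.2).le
  have hLle : ∀ (U : 𝒰) (x : X), x ∈ (U : Set X) → L U ≤ S x := by
    intro U x hx
    have h1 : L U ≤ ⨆ V : 𝒰, F x V := by
      refine ciInf_le ⟨0, ?_⟩ (⟨x, hx⟩ : (U : Set X))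
      rintro a ⟨z, rfl⟩
      exact Real.iSup_nonneg fun V => infDist_nonneg
    refine h1.trans (Real.iSup_le (fun V => hFleS x V) (hSpos x).le)
  -- the coordinates
  set g : X → 𝒰 → ℝ := fun x U => (L U / c ^ 2) * (F x U / S x) with hg
  have hgzero : ∀ x (U : 𝒰), x ∉ (U : Set X) → g x U = 0 := by
    intro x U hx; simp [hg, hFzero x U hx]
  -- coordinatewise Lipschitz bound
  have hkey : ∀ (x y : X) (U : 𝒰), x ∈ (U : Set X) → |g x U - g y U| ≤ dist x y / c := by
    intro x y U hx
    have hSx := hSpos x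
    have hSy := hSpos y
    have hquot : |F x U / S x - F y U / S y| ≤ c * dist x y / S x := by
      have hid : F x U / S x - F y U / S y =
          (F x U - F y U) / S x + (F y U / S y) * ((S y - S x) / S x) := by
        field_simp
        ring
      rw [hid]
      have h1 : |(F x U - F y U) / S x| ≤ dist x y / S x := by
        rw [abs_div, abs_of_pos hSx]
        gcongr
        exact hFlip U x y
      have h2 : |(F y U / S y) * ((S y - S x) / S x)| ≤ (2 * (m : ℝ)) * dist x y / S x := by
        rw [abs_mul, abs_div, abs_div, abs_of_pos hSx, abs_of_pos hSy,
          abs_of_nonneg (hFnonneg y U)]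
        have hb1 : F y U / S y ≤ 1 := (div_le_one hSy).2 (hFleS y U)
        have hb2 : |S y - S x| / S x ≤ (2 * (m : ℝ)) * dist x y / S x := by
          gcongr
          rw [abs_sub_comm]
          exact hSlip x y
        calc F y U / S y * (|S y - S x| / S x) ≤ 1 * (|S y - S x| / S x) := by
              exact mul_le_mul_of_nonneg_right hb1 (div_nonneg (abs_nonneg _) hSx.le)
          _ = |S y - S x| / S x := one_mul _
          _ ≤ (2 * (m : ℝ)) * dist x y / S x := hb2
      calc |(F x U - F y U) / S x + (F y U / S y) * ((S y - S x) / S x)|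
          ≤ |(F x U - F y U) / S x| + |(F y U / S y) * ((S y - S x) / S x)| := abs_add_le _ _
        _ ≤ dist x y / S x + (2 * (m : ℝ)) * dist x y / S x := add_le_add h1 h2
        _ = c * dist x y / S x := by rw [hc]; ring
    have hstep : |g x U - g y U| = (L U / c ^ 2) * |F x U / S x - F y U / S y| := by
      rw [hg]
      simp only []
      rw [← mul_sub, abs_mul, abs_of_nonneg (div_nonneg (hLnonneg U) (sq_nonneg c))]
    rw [hstep]
    calc (L U / c ^ 2) * |F x U / S x - F y U / S y|
        ≤ (L U / c ^ 2) * (c * dist x y / S x) := by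
          exact mul_le_mul_of_nonneg_left hquot (div_nonneg (hLnonneg U) (sq_nonneg c))
      _ = (L U / S x) * (dist x y / c) := by field_simp
      _ ≤ 1 * (dist x y / c) := by
          exact mul_le_mul_of_nonneg_right ((div_le_one hSx).2 (hLle U x hx))
            (div_nonneg dist_nonneg hcpos.le)
      _ = dist x y / c := one_mul _
  have hkey' : ∀ (x y : X) (U : 𝒰), |g x U - g y U| ≤ dist x y / c := by
    intro x y U
    by_cases hx : x ∈ (U : Set X)
    · exact hkey x y U hx
    by_cases hy : y ∈ (U : Set X)
    · rw [abs_sub_comm, dist_comm]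
      exact hkey y x U hy
    · rw [hgzero x U hx, hgzero y U hy]
      simpa using div_nonneg dist_nonneg hcpos.le
  -- membership in ℓ²
  have hp2 : (0:ℝ) < (2 : ℝ≥0∞).toReal := by norm_num
  have hmem : ∀ x, Memℓp (g x) 2 := by
    intro x
    apply memℓp_gen
    apply summable_of_ne_finset_zero (s := t x)
    intro U hU
    rw [hgzero x U (fun h => hU ((htmem x U).2 h)), norm_zero,
      Real.zero_rpow (by norm_num)]
  refine ⟨fun x => ⟨g x, hmem x⟩, fun x U => rfl, ?_⟩
  intro x y
  apply lp.norm_le_of_forall_sum_le hp2 dist_nonneg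
  intro s
  have htoReal : (2 : ℝ≥0∞).toReal = 2 := by norm_num
  have hcoe : ∀ U : 𝒰, ((⟨g x, hmem x⟩ - ⟨g y, hmem y⟩ : lp (fun _ : 𝒰 => ℝ) 2) : ∀ _ : 𝒰, ℝ) U
      = g x U - g y U := fun U => rfl
  have hterm : ∀ U : 𝒰, ‖g x U - g y U‖ ^ (2 : ℝ≥0∞).toReal = |g x U - g y U| ^ (2:ℕ) := by
    intro U
    rw [htoReal, Real.norm_eq_abs, ← Real.rpow_natCast]
    norm_num
  simp only [hcoe, hterm]
  -- restrict to the support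
  set T : Finset 𝒰 := t x ∪ t y with hT
  have hTcard : (T.card : ℝ) ≤ 2 * (m : ℝ) := by
    have h1 := Finset.card_union_le (t x) (t y)
    have h2 := htcard x
    have h3 := htcard y
    have : T.card ≤ m + m := le_trans h1 (add_le_add h2 h3)
    push_cast
    calc (T.card : ℝ) ≤ ((m + m : ℕ) : ℝ) := by exact_mod_cast this
      _ = 2 * (m : ℝ) := by push_cast; ring
  have hzero : ∀ U ∈ s, U ∉ s ∩ T → |g x U - g y U| ^ (2:ℕ) = 0 := by
    intro U hUs hUn
    have hUT : U ∉ T := fun h => hUn (Finset.mem_inter.2 ⟨hUs, h⟩)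
    have hx : x ∉ (U : Set X) := fun h => hUT (Finset.mem_union_left _ ((htmem x U).2 h))
    have hy : y ∉ (U : Set X) := fun h => hUT (Finset.mem_union_right _ ((htmem y U).2 h))
    rw [hgzero x U hx, hgzero y U hy]
    simp
  rw [← Finset.sum_subset Finset.inter_subset_left hzero]
  have hbound : ∀ U ∈ s ∩ T, |g x U - g y U| ^ (2:ℕ) ≤ (dist x y / c) ^ (2:ℕ) := by
    intro U _
    exact pow_le_pow_left₀ (abs_nonneg _) (hkey' x y U) 2
  calc ∑ U ∈ s ∩ T, |g x U - g y U| ^ (2:ℕ) ≤ ∑ _U ∈ s ∩ T, (dist x y / c) ^ (2:ℕ) :=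
      Finset.sum_le_sum hbound
    _ = ((s ∩ T).card : ℝ) * (dist x y / c) ^ (2:ℕ) := by rw [Finset.sum_const, nsmul_eq_mul]
    _ ≤ (2 * (m : ℝ)) * (dist x y / c) ^ (2:ℕ) := by
        apply mul_le_mul_of_nonneg_right _ (by positivity)
        refine le_trans ?_ hTcard
        exact_mod_cast Finset.card_le_card (Finset.inter_subset_right)
    _ ≤ dist x y ^ (2 : ℝ≥0∞).toReal := by
        rw [htoReal, div_pow, ← Real.rpow_natCast (dist x y) 2]
        norm_num
        have hcsq : 2 * (m:ℝ) ≤ c ^ 2 := by rw [hc]; nlinarith [Nat.cast_nonneg (α := ℝ) m]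
        calc 2 * (m:ℝ) * (dist x y ^ 2 / c ^ 2)
            ≤ c ^ 2 * (dist x y ^ 2 / c ^ 2) :=
              mul_le_mul_of_nonneg_right hcsq (div_nonneg (sq_nonneg _) (sq_nonneg c))
          _ = dist x y ^ 2 := by
              rw [mul_comm, div_mul_cancel₀ _ (pow_ne_zero 2 hcpos.ne')]
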